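/- Let λ > 1, c ∈ (0,1), and a, b > 0 with I := [c − a, c + b] ⊆ [0,1]. Let f be a map which on I is given by f(x) = c + λ(x − c) for x ≤ c and f(x) = c − λ(x − c) for x > c (so c is a fixed turning point with slopes λ and −λ). Then m({x ∈ I : f(x) ∈ I})/m(I) = (a + min{a, λb}) / (λ(a + b)). In particular, if a = λb this probability equals 2/(λ + 1), and 2/(λ+1) > 1/λ. -/
import Mathlib


open MeasureTheory Set

/-- Let `λ > 1`, `c ∈ (0,1)`, `a, b > 0` with `I = [c−a, c+b] ⊆ [0,1]`, and let `f` be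
given on `I` by `f(x) = c + λ(x−c)` for `x ≤ c` and `f(x) = c − λ(x−c)` for `x > c`
(a fixed turning point at `c` with slopes `±λ`). Then the Ulam transition probability of
`I` to itself is `m({x ∈ I : f x ∈ I})/m(I) = (a + min{a, λb})/(λ(a+b))`; in particular
it equals `2/(λ+1)` when `a = λb`, and `2/(λ+1) > 1/λ`. -/
theorem turning_point_ulam_probability
    (lam c a b : ℝ) (hlam : 1 < lam) (hc : c ∈ Set.Ioo (0 : ℝ) 1)
    (ha : 0 < a) (hb : 0 < b)
    (hI : Set.Icc (c - a) (c + b) ⊆ Set.Icc (0 : ℝ) 1)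
    (f : ℝ → ℝ)
    (hf₁ : ∀ x ∈ Set.Icc (c - a) (c + b), x ≤ c → f x = c + lam * (x - c))
    (hf₂ : ∀ x ∈ Set.Icc (c - a) (c + b), c < x → f x = c - lam * (x - c)) :
    (volume {x ∈ Set.Icc (c - a) (c + b) | f x ∈ Set.Icc (c - a) (c + b)}).toReal
        / (volume (Set.Icc (c - a) (c + b))).toReal
      = (a + min a (lam * b)) / (lam * (a + b)) ∧
    (a = lam * b →
      (volume {x ∈ Set.Icc (c - a) (c + b) | f x ∈ Set.Icc (c - a) (c + b)}).toReal
          / (volume (Set.Icc (c - a) (c + b))).toReal = 2 / (lam + 1)) ∧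
    1 / lam < 2 / (lam + 1) := by
  have hlam0 : (0 : ℝ) < lam := lt_trans one_pos hlam
  have hmin : (0:ℝ) < min b (a / lam) := lt_min hb (div_pos ha hlam0)
  have hset : {x ∈ Set.Icc (c - a) (c + b) | f x ∈ Set.Icc (c - a) (c + b)}
      = Set.Icc (c - a / lam) (c + min b (a / lam)) := by
    ext x
    simp only [Set.mem_setOf_eq, Set.mem_Icc]
    constructor
    · rintro ⟨⟨hx1, hx2⟩, hfx⟩
      have hcancel : a / lam * lam = a := div_mul_cancel₀ a hlam0.ne'
      rcases le_or_gt x c with hxc | hxc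
      · rw [hf₁ x ⟨hx1, hx2⟩ hxc] at hfx
        obtain ⟨h1, h2⟩ := Set.mem_Icc.mp hfx
        constructor
        · nlinarith [hfx.1]
        · have : x ≤ c := hxc
          linarith [le_min hb.le (div_pos ha hlam0).le]
      · rw [hf₂ x ⟨hx1, hx2⟩ hxc] at hfx
        obtain ⟨h1, h2⟩ := Set.mem_Icc.mp hfx
        constructor
        · linarith [div_pos ha hlam0]
        · have hla : lam * (x - c) ≤ a := by linarith
          have hxa : x - c ≤ a / lam := by
            rw [le_div_iff₀ hlam0]; nlinarith
          rcases min_cases b (a / lam) with ⟨hm, _⟩ | ⟨hm, _⟩ <;> rw [hm] <;> linarith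
    · rintro ⟨hx1, hx2⟩
      have hcancel : a / lam * lam = a := div_mul_cancel₀ a hlam0.ne'
      have hle : a / lam ≤ a := by
        rw [div_le_iff₀ hlam0]; nlinarith
      have hxI : x ∈ Set.Icc (c - a) (c + b) := by
        constructor
        · linarith
        · have := min_le_left b (a / lam); linarith
      refine ⟨Set.mem_Icc.mp hxI, ?_⟩
      rcases le_or_gt x c with hxc | hxc
      · rw [hf₁ x hxI hxc]
        constructor
        · have h1 : -(a / lam) ≤ x - c := by linarith
          nlinarith [mul_le_mul_of_nonneg_left h1 hlam0.le]
        · nlinarith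
      · rw [hf₂ x hxI hxc]
        constructor
        · have hxm : x - c ≤ a / lam := le_trans (by linarith) (min_le_right b (a/lam))
          have : lam * (x - c) ≤ a := by nlinarith
          linarith
        · nlinarith
  rw [hset]
  have hvol1 : (volume (Set.Icc (c - a / lam) (c + min b (a / lam)))).toReal
      = min b (a / lam) + a / lam := by
    rw [Real.volume_Icc, ENNReal.toReal_ofReal (by linarith [div_pos ha hlam0, hmin])]
    ring
  have hvol2 : (volume (Set.Icc (c - a) (c + b))).toReal = a + b := by
    rw [Real.volume_Icc, ENNReal.toReal_ofReal (by linarith)]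
    ring
  have hmin2 : min a (lam * b) = lam * min b (a / lam) := by
    have hcancel : a / lam * lam = a := div_mul_cancel₀ a hlam0.ne'
    rcases le_total b (a / lam) with h | h
    · rw [min_eq_left h, min_eq_right (by nlinarith [mul_le_mul_of_nonneg_left h hlam0.le])]
    · rw [min_eq_right h, min_eq_left (by nlinarith [mul_le_mul_of_nonneg_left h hlam0.le])]
      field_simp
  have hkey : (min b (a / lam) + a / lam) / (a + b)
      = (a + min a (lam * b)) / (lam * (a + b)) := by
    rw [hmin2]
    field_simp
    ring
  refine ⟨by rw [hvol1, hvol2, hkey], ?_, ?_⟩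
  · intro hab
    rw [hvol1, hvol2, hkey, hab]
    rw [min_eq_left (le_refl _)]
    rw [div_eq_div_iff (by positivity) (by positivity)]
    ring
  · rw [div_lt_div_iff₀ hlam0 (by linarith)]
    nlinarith
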